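/- Let 𝕂 be a field equipped with a non-Archimedean absolute value whose closed unit ball is compact (for example a non-Archimedean local field such as ℚ_p). Let G be a t.d.l.c. group which is the union of a family (G_i)_{i∈I} of closed subgroups that is directed under inclusion, and let M ≥ 0. If every G_i admits a left-invariant normed 𝕂-mean of operator norm ≤ M, then G admits a left-invariant normed 𝕂-mean of operator norm ≤ M; hence ‖G‖_𝕂 ≤ sup_{i∈I} ‖G_i‖_𝕂. -/

import Mathlib

open BoundedContinuousFunction

/-- The left translate of a bounded continuous function: `(leftTranslate 𝕂 g f) x = f (g⁻¹ * x)`. -/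
noncomputable def leftTranslate {G : Type*} [Group G] [TopologicalSpace G] [IsTopologicalGroup G]
    (𝕂 : Type*) [NormedField 𝕂] (g : G) (f : G →ᵇ 𝕂) : G →ᵇ 𝕂 :=
  f.compContinuous ⟨fun x => g⁻¹ * x, continuous_mul_left g⁻¹⟩

/-- `m` is a left-invariant normed `𝕂`-mean on `G`: a bounded (equivalently, continuous)
linear functional on the space of bounded continuous `𝕂`-valued functions on `G`, sending the
constant function `𝟙_G` to `1`, and invariant under left translation. -/
def IsInvariantMean (𝕂 : Type*) [NormedField 𝕂] (G : Type*) [Group G] [TopologicalSpace G]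
    [IsTopologicalGroup G] (m : (G →ᵇ 𝕂) →ₗ[𝕂] 𝕂) : Prop :=
  (∃ C : ℝ, ∀ f : G →ᵇ 𝕂, ‖m f‖ ≤ C * ‖f‖) ∧
    m (BoundedContinuousFunction.const G (1 : 𝕂)) = 1 ∧
    ∀ (g : G) (f : G →ᵇ 𝕂), m (leftTranslate 𝕂 g f) = m f

/-- The operator norm of the linear functional `m` is at most `C`. -/
def MeanNormLE (𝕂 : Type*) [NormedField 𝕂] (G : Type*) [Group G] [TopologicalSpace G]
    [IsTopologicalGroup G] (m : (G →ᵇ 𝕂) →ₗ[𝕂] 𝕂) (C : ℝ) : Prop :=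
  ∀ f : G →ᵇ 𝕂, ‖m f‖ ≤ C * ‖f‖

/-- Every closed ball of a normed field with compact closed unit ball is compact. -/
lemma isCompact_closedBall_of_unit {𝕂 : Type*} [NormedField 𝕂]
    (hball : IsCompact (Metric.closedBall (0 : 𝕂) 1)) (r : ℝ) :
    IsCompact (Metric.closedBall (0 : 𝕂) r) := by
  by_cases hc : ∃ c : 𝕂, 1 < ‖c‖
  · obtain ⟨c, hc⟩ := hc
    obtain ⟨n, hn⟩ := pow_unbounded_of_one_lt r hc
    have hcn : (0 : ℝ) < ‖c‖ ^ n := pow_pos (lt_trans one_pos hc) n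
    have hc0 : (c : 𝕂) ≠ 0 := by
      intro h0
      rw [h0, norm_zero] at hc; linarith
    have hK : IsCompact ((fun x => c ^ n * x) '' Metric.closedBall (0 : 𝕂) 1) :=
      hball.image (continuous_mul_left _)
    refine IsCompact.of_isClosed_subset hK Metric.isClosed_closedBall ?_
    intro x hx
    rw [Metric.mem_closedBall, dist_zero_right] at hx
    refine ⟨(c ^ n)⁻¹ * x, ?_, by field_simp⟩
    rw [Metric.mem_closedBall, dist_zero_right, norm_mul, norm_inv, norm_pow]
    rw [inv_mul_le_iff₀ hcn, mul_one]
    exact hx.trans hn.le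
  · push_neg at hc
    refine IsCompact.of_isClosed_subset hball Metric.isClosed_closedBall ?_
    intro x hx
    rw [Metric.mem_closedBall, dist_zero_right]
    exact hc x

/-- Over a non-Archimedean valued field with compact closed unit ball, if a
t.d.l.c. group `G` is the directed union of closed subgroups each admitting a left-invariant
normed `𝕂`-mean of operator norm `≤ M`, then so does `G`. -/
theorem invariantMean_of_directedUnion (𝕂 : Type*) [NormedField 𝕂] [IsUltrametricDist 𝕂]
    (hball : IsCompact (Metric.closedBall (0 : 𝕂) 1))
    (G : Type*) [Group G] [TopologicalSpace G] [IsTopologicalGroup G]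
    [LocallyCompactSpace G] [TotallyDisconnectedSpace G] [T2Space G]
    (I : Type*) (Gi : I → Subgroup G)
    (hclosed : ∀ i, IsClosed (Gi i : Set G))
    (hdir : Directed (· ≤ ·) Gi)
    (hcover : ∀ g : G, ∃ i, g ∈ Gi i)
    (M : ℝ)
    (h : ∀ i, ∃ m : (↥(Gi i) →ᵇ 𝕂) →ₗ[𝕂] 𝕂,
      IsInvariantMean 𝕂 ↥(Gi i) m ∧ MeanNormLE 𝕂 ↥(Gi i) m M) :
    ∃ m : (G →ᵇ 𝕂) →ₗ[𝕂] 𝕂, IsInvariantMean 𝕂 G m ∧ MeanNormLE 𝕂 G m M := by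
  classical
  choose mi hmi hMi using h
  have hI : Nonempty I := ⟨(hcover 1).choose⟩
  -- M is nonnegative
  have hNE : ∀ i, Nonempty ↥(Gi i) := fun i => ⟨⟨1, (Gi i).one_mem⟩⟩
  have hM : (0 : ℝ) ≤ M := by
    obtain ⟨i⟩ := hI
    have hne := hNE i
    have h1 := hMi i (BoundedContinuousFunction.const _ (1 : 𝕂))
    rw [(hmi i).2.1, norm_one, BoundedContinuousFunction.norm_const_eq, norm_one, mul_one] at h1
    linarith
  -- the "sections" filter on I
  set S : I → Set I := fun i => {j | Gi i ≤ Gi j} with hS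
  have hdirF : Directed (· ≥ ·) (fun i => (Filter.principal (S i))) := by
    intro i j
    obtain ⟨k, hik, hjk⟩ := hdir i j
    exact ⟨k, Filter.principal_mono.2 (fun l hl => le_trans hik hl),
      Filter.principal_mono.2 (fun l hl => le_trans hjk hl)⟩
  have hne : ∀ i, (Filter.principal (S i)).NeBot :=
    fun i => Filter.principal_neBot_iff.2 ⟨i, le_refl (Gi i)⟩
  have hFne : (⨅ i, Filter.principal (S i)).NeBot := Filter.iInf_neBot_of_directed hdirF hne
  set U : Ultrafilter I := Ultrafilter.of (⨅ i, Filter.principal (S i)) with hUdef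
  have hU : ∀ i, S i ∈ U := fun i =>
    Ultrafilter.of_le _ (Filter.mem_iInf_of_mem i (Filter.mem_principal_self _))
  -- restriction to subgroups
  let res : ∀ i, (G →ᵇ 𝕂) → (↥(Gi i) →ᵇ 𝕂) := fun i f =>
    f.compContinuous ⟨Subtype.val, continuous_subtype_val⟩
  have hres_norm : ∀ i (f : G →ᵇ 𝕂), ‖res i f‖ ≤ ‖f‖ := fun i f =>
    BoundedContinuousFunction.norm_compContinuous_le f _
  have hres_add : ∀ i (f g : G →ᵇ 𝕂), res i (f + g) = res i f + res i g := by
    intro i f g; ext x; rfl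
  have hres_smul : ∀ i (c : 𝕂) (f : G →ᵇ 𝕂), res i (c • f) = c • res i f := by
    intro i c f; ext x; rfl
  let φ : (G →ᵇ 𝕂) → I → 𝕂 := fun f i => mi i (res i f)
  have hφ : ∀ (f : G →ᵇ 𝕂) (i : I), ‖φ f i‖ ≤ M * ‖f‖ := fun f i =>
    le_trans (hMi i (res i f)) (mul_le_mul_of_nonneg_left (hres_norm i f) hM)
  -- limits along the ultrafilter
  have hlim : ∀ f : G →ᵇ 𝕂, ∃ x : 𝕂, ‖x‖ ≤ M * ‖f‖ ∧ Filter.Tendsto (φ f) ↑U (nhds x) := by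
    intro f
    have hmem : (↑(U.map (φ f)) : Filter 𝕂) ≤ Filter.principal (Metric.closedBall 0 (M * ‖f‖)) := by
      rw [Filter.le_principal_iff]
      exact Filter.mem_map.2 (Filter.univ_mem' (fun i => by
        simpa [Metric.mem_closedBall, dist_zero_right] using hφ f i))
    obtain ⟨x, hx, hx2⟩ := (isCompact_closedBall_of_unit hball (M * ‖f‖)).ultrafilter_le_nhds
      (U.map (φ f)) hmem
    rw [Metric.mem_closedBall, dist_zero_right] at hx
    exact ⟨x, hx, hx2⟩
  choose L hL1 hL2 using hlim
  have hNeBot : (↑U : Filter I).NeBot := U.neBot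
  -- the mean
  refine ⟨{ toFun := L
            map_add' := ?_
            map_smul' := ?_ }, ⟨⟨M, ?_⟩, ?_, ?_⟩, ?_⟩
  · intro f g
    have h1 : Filter.Tendsto (φ (f + g)) ↑U (nhds (L f + L g)) := by
      have : φ (f + g) = fun i => φ f i + φ g i := by
        funext i; simp only [φ, hres_add, map_add]
      rw [this]
      exact (hL2 f).add (hL2 g)
    exact tendsto_nhds_unique (hL2 (f + g)) h1
  · intro c f
    have h1 : Filter.Tendsto (φ (c • f)) ↑U (nhds (c * L f)) := by
      have : φ (c • f) = fun i => c * φ f i := by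
        funext i; simp only [φ, hres_smul, map_smul, smul_eq_mul]
      rw [this]
      exact (hL2 f).const_mul c
    exact tendsto_nhds_unique (hL2 (c • f)) h1
  · intro f; exact hL1 f
  · -- constant function
    have h1 : Filter.Tendsto (φ (BoundedContinuousFunction.const G (1 : 𝕂))) ↑U (nhds 1) := by
      have : φ (BoundedContinuousFunction.const G (1 : 𝕂)) = fun _ => (1 : 𝕂) := by
        funext i
        have : res i (BoundedContinuousFunction.const G (1 : 𝕂)) =
            BoundedContinuousFunction.const ↥(Gi i) (1 : 𝕂) := by ext x; rfl
        simp only [φ, this, (hmi i).2.1]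
      rw [this]
      exact tendsto_const_nhds
    exact tendsto_nhds_unique (hL2 _) h1
  · -- invariance
    intro g f
    obtain ⟨i₀, hi₀⟩ := hcover g
    have heq : φ (leftTranslate 𝕂 g f) =ᶠ[↑U] φ f := by
      filter_upwards [hU i₀] with j hj
      have hgj : g ∈ Gi j := hj hi₀
      have hkey : res j (leftTranslate 𝕂 g f) =
          leftTranslate 𝕂 (⟨g, hgj⟩ : ↥(Gi j)) (res j f) := by
        ext x
        simp only [leftTranslate, res, BoundedContinuousFunction.compContinuous_apply,
          ContinuousMap.coe_mk]
        rfl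
      simp only [φ, hkey, (hmi j).2.2]
    show L (leftTranslate 𝕂 g f) = L f
    exact tendsto_nhds_unique (hL2 (leftTranslate 𝕂 g f)) ((hL2 f).congr' heq.symm)
  · intro f; exact hL1 f
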